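/- Let l, h > 0 and ψg ∈ ℂ. Set d = 1 + e^{(2+2i)h} - l + e^{(2+2i)h} l, A = ψg (l-1)/d, B = -ψg e^{(2+2i)h}(l+1)/d, D = -2 ψg e^{(1+i)h + (1+i)h/l}/d, and define ψ : [0,∞) → ℂ by ψ(z) = A e^{(1+i)z} + B e^{-(1+i)z} + ψg for 0 ≤ z ≤ h and ψ(z) = D e^{-(1+i)z/l} + ψg for z ≥ h. Then ψ is well defined and continuous on [0,∞), ψ(0) = 0, ψ(z) → ψg as z → ∞, ψ''(z) = 2i(ψ(z) - ψg) for 0 < z < h, l² ψ''(z) = 2i(ψ(z) - ψg) for z > h, and the one-sided derivatives at h satisfy ψ'_-(h) = l² ψ'_+(h). -/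

import Mathlib

open Complex Filter Set

lemma expDeriv (c : ℂ) (z : ℝ) :
    HasDerivAt (fun t : ℝ => Complex.exp (c * t)) (c * Complex.exp (c * z)) z := by
  have h1 : HasDerivAt (fun t : ℝ => c * (t : ℂ)) c z := by
    simpa using (Complex.ofRealCLM.hasDerivAt (x := z)).const_mul c
  simpa [mul_comm] using h1.cexp

theorem one_jump_solution_properties (l h : ℝ) (hl : 0 < l) (hh : 0 < h) (ψg : ℂ)
    (d A B D : ℂ)
    (hd : d = 1 + Complex.exp ((2 + 2 * Complex.I) * h) - l
        + Complex.exp ((2 + 2 * Complex.I) * h) * l)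
    (hA : A = ψg * ((l : ℂ) - 1) / d)
    (hB : B = -(ψg * Complex.exp ((2 + 2 * Complex.I) * h) * ((l : ℂ) + 1)) / d)
    (hD : D = -(2 * ψg * Complex.exp ((1 + Complex.I) * h + (1 + Complex.I) * h / l)) / d)
    (ψ : ℝ → ℂ)
    (hψlow : ∀ z ∈ Set.Icc (0 : ℝ) h,
      ψ z = A * Complex.exp ((1 + Complex.I) * z) + B * Complex.exp (-(1 + Complex.I) * z) + ψg)
    (hψhigh : ∀ z ∈ Set.Ici h,
      ψ z = D * Complex.exp (-(1 + Complex.I) * z / l) + ψg) :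
    -- well-definedness: the two formulas agree at z = h
    (A * Complex.exp ((1 + Complex.I) * h) + B * Complex.exp (-(1 + Complex.I) * h) + ψg
        = D * Complex.exp (-(1 + Complex.I) * h / l) + ψg) ∧
    ContinuousOn ψ (Set.Ici (0 : ℝ)) ∧
    ψ 0 = 0 ∧
    Filter.Tendsto ψ Filter.atTop (nhds ψg) ∧
    (∀ z ∈ Set.Ioo (0 : ℝ) h,
      deriv (deriv ψ) z = 2 * Complex.I * (ψ z - ψg)) ∧
    (∀ z ∈ Set.Ioi h,
      (l : ℂ) ^ 2 * deriv (deriv ψ) z = 2 * Complex.I * (ψ z - ψg)) ∧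
    (∃ dm dp : ℂ, HasDerivWithinAt ψ dm (Set.Icc 0 h) h ∧
      HasDerivWithinAt ψ dp (Set.Ici h) h ∧ dm = (l : ℂ) ^ 2 * dp) := by
  have hlC : ((l : ℂ)) ≠ 0 := by exact_mod_cast hl.ne'
  have hI2 : (1 + Complex.I)^2 = 2 * Complex.I := by rw [add_sq, Complex.I_sq]; ring
  -- d ≠ 0
  have habs : ‖Complex.exp ((2 + 2 * Complex.I) * h)‖ = Real.exp (2 * h) := by
    rw [Complex.norm_exp]
    congr 1
    simp [Complex.mul_re]
  have dnz : d ≠ 0 := by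
    intro h0
    have he : Complex.exp ((2 + 2 * Complex.I) * h) * (1 + l) = (l : ℂ) - 1 := by
      rw [hd] at h0; linear_combination h0
    have := congrArg (‖·‖) he
    rw [norm_mul, habs] at this
    have h1 : ‖1 + (l:ℂ)‖ = 1 + l := by
      rw [show (1 + (l:ℂ)) = ((1 + l : ℝ) : ℂ) by push_cast; ring, Complex.norm_real, Real.norm_eq_abs,
        abs_of_pos (by linarith)]
    have h2 : ‖(l:ℂ) - 1‖ = |l - 1| := by
      rw [show ((l:ℂ) - 1) = ((l - 1 : ℝ) : ℂ) by push_cast; ring, Complex.norm_real, Real.norm_eq_abs]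
    rw [h1, h2] at this
    have h3 : (1:ℝ) ≤ Real.exp (2 * h) := Real.one_le_exp (by linarith)
    have h4 : |l - 1| < 1 + l := abs_lt.2 ⟨by linarith, by linarith⟩
    nlinarith [Real.exp_pos (2*h)]
  -- notation
  set c : ℂ := 1 + Complex.I with hc
  set E : ℂ := Complex.exp (c * h) with hE
  set El : ℂ := Complex.exp (c * h / l) with hEl
  have hEne : E ≠ 0 := Complex.exp_ne_zero _
  have hElne : El ≠ 0 := Complex.exp_ne_zero _
  have hE2 : Complex.exp ((2 + 2 * Complex.I) * h) = E * E := by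
    rw [hE, ← Complex.exp_add]; congr 1; ring
  have hEn : Complex.exp (-(1 + Complex.I) * (h:ℂ)) = E⁻¹ := by
    rw [hE, ← Complex.exp_neg]; congr 1; ring
  have hEEl : Complex.exp ((1 + Complex.I) * h + (1 + Complex.I) * h / l) = E * El := by
    rw [hE, hEl, ← Complex.exp_add]
  have hEln : Complex.exp (-(1 + Complex.I) * (h:ℂ) / l) = El⁻¹ := by
    rw [hEl, ← Complex.exp_neg]; congr 1; ring
  -- the low and high model functions
  set c₂ : ℂ := -(1 + Complex.I) / l with hc2
  have hhigh' : ∀ z ∈ Set.Ici h, ψ z = D * Complex.exp (c₂ * z) + ψg := by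
    intro z hz
    rw [hψhigh z hz]; congr 2; rw [hc2, hc]; ring
  set F : ℝ → ℂ := fun z => A * Complex.exp (c * z) + B * Complex.exp (-c * z) + ψg with hF
  set F1 : ℝ → ℂ := fun z => A * c * Complex.exp (c * z) - B * c * Complex.exp (-c * z) with hF1
  set G : ℝ → ℂ := fun z => D * Complex.exp (c₂ * z) + ψg with hG
  set G1 : ℝ → ℂ := fun z => D * c₂ * Complex.exp (c₂ * z) with hG1
  have hlowF : ∀ z ∈ Set.Icc (0:ℝ) h, ψ z = F z := fun z hz => hψlow z hz
  have hFd : ∀ z : ℝ, HasDerivAt F (F1 z) z := by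
    intro z
    have := (((expDeriv c z).const_mul A).add ((expDeriv (-c) z).const_mul B)).add_const ψg
    refine this.congr_deriv ?_
    simp only [hF1]; ring
  have hF1d : ∀ z : ℝ, HasDerivAt F1 (2 * Complex.I * (F z - ψg)) z := by
    intro z
    have := ((expDeriv c z).const_mul (A * c)).sub ((expDeriv (-c) z).const_mul (B * c))
    refine this.congr_deriv ?_
    simp only [hF]
    linear_combination (Complex.exp (c * z) * A + Complex.exp (-c * z) * B) * hI2
  have hGd : ∀ z : ℝ, HasDerivAt G (G1 z) z := by
    intro z
    have := ((expDeriv c₂ z).const_mul D).add_const ψg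
    refine this.congr_deriv ?_
    simp only [hG1]; ring
  have hG1d : ∀ z : ℝ, HasDerivAt G1 (D * c₂^2 * Complex.exp (c₂ * z)) z := by
    intro z
    have := (expDeriv c₂ z).const_mul (D * c₂)
    refine this.congr_deriv ?_
    ring
  refine ⟨?_, ?_, ?_, ?_, ?_, ?_, ?_⟩
  · -- agreement at h
    rw [hA, hB, hD, hE2, hEn, hEEl, hEln, hE]
    field_simp
    ring
  · -- continuity
    have hcl : ContinuousOn ψ (Set.Icc 0 h) := by
      apply ContinuousOn.congr (f := F) _ hlowF
      apply Continuous.continuousOn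
      fun_prop
    have hch : ContinuousOn ψ (Set.Ici h) := by
      apply ContinuousOn.congr (f := G) _ hhigh'
      apply Continuous.continuousOn
      fun_prop
    rw [← Set.Icc_union_Ici_eq_Ici hh.le]
    intro z hz
    rcases lt_trichotomy z h with hlt | rfl | hgt
    · have hz' : z ∈ Set.Icc 0 h := by
        rcases hz with hz | hz
        · exact hz
        · exact absurd hz (by simpa using hlt.not_ge)
      exact (hcl z hz').union (continuousWithinAt_of_notMem_closure (by
        simpa using hlt.not_ge))
    · exact (hcl z ⟨hh.le, le_rfl⟩).union (hch z Set.self_mem_Ici)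
    · exact (continuousWithinAt_of_notMem_closure (by
        simp [closure_Icc, hgt.not_ge])).union (hch z hgt.le)
  · -- ψ 0 = 0
    rw [hψlow 0 ⟨le_rfl, hh.le⟩]
    simp only [Complex.ofReal_zero, mul_zero, Complex.exp_zero, mul_one]
    rw [hA, hB]
    field_simp [dnz]
    have heq : Complex.exp ((2 + 2 * Complex.I) * h) = Complex.exp (2 * (1 + Complex.I) * h) := by
      congr 1; ring
    linear_combination ψg * hd + ψg * ((l:ℂ) + 1) * heq
  · -- tendsto
    have h0 : Tendsto (fun z : ℝ => Complex.exp (c₂ * z)) atTop (nhds 0) := by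
      rw [tendsto_zero_iff_norm_tendsto_zero]
      have hre : ∀ z : ℝ, ‖Complex.exp (c₂ * z)‖ = Real.exp (-(z / l)) := by
        intro z
        rw [Complex.norm_exp]
        congr 1
        rw [hc2]
        have : -(1 + Complex.I) / l * z = ((-(z/l) : ℝ) : ℂ) + ((-(z/l) : ℝ) : ℂ) * Complex.I := by
          push_cast; field_simp; ring
        rw [this]
        simp
      simp only [hre]
      exact Real.tendsto_exp_atBot.comp
        (tendsto_neg_atBot_iff.mpr (tendsto_id.atTop_div_const hl))
    have h1 : Tendsto G atTop (nhds ψg) := by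
      have := (h0.const_mul D).add_const ψg
      simpa using this
    apply h1.congr'
    filter_upwards [eventually_ge_atTop h] with z hz
    exact (hhigh' z hz).symm
  · -- ODE on (0,h)
    intro z hz
    have hnb : Set.Ioo (0:ℝ) h ∈ nhds z := isOpen_Ioo.mem_nhds hz
    have e0 : ∀ t ∈ Set.Ioo (0:ℝ) h, deriv ψ t = F1 t := by
      intro t ht
      have het : ψ =ᶠ[nhds t] F :=
        eventually_of_mem (isOpen_Ioo.mem_nhds ht) fun s hs => hlowF s ⟨hs.1.le, hs.2.le⟩
      rw [het.deriv_eq, (hFd t).deriv]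
    have e1 : deriv ψ =ᶠ[nhds z] F1 := eventually_of_mem hnb e0
    rw [e1.deriv_eq, (hF1d z).deriv, hlowF z ⟨hz.1.le, hz.2.le⟩]
  · -- ODE on (h,∞)
    intro z hz
    have hnb : Set.Ioi h ∈ nhds z := isOpen_Ioi.mem_nhds hz
    have e0 : ∀ t ∈ Set.Ioi h, deriv ψ t = G1 t := by
      intro t ht
      have het : ψ =ᶠ[nhds t] G :=
        eventually_of_mem (isOpen_Ioi.mem_nhds ht) fun s hs => hhigh' s (Set.mem_Ici.2 (le_of_lt hs))
      rw [het.deriv_eq, (hGd t).deriv]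
    have e1 : deriv ψ =ᶠ[nhds z] G1 := eventually_of_mem hnb e0
    rw [e1.deriv_eq, (hG1d z).deriv, hhigh' z (Set.mem_Ici.2 (le_of_lt hz))]
    have hcc : (l:ℂ)^2 * c₂^2 = 2 * Complex.I := by
      rw [hc2]
      field_simp
      linear_combination hI2
    linear_combination D * Complex.exp (c₂ * z) * hcc
  · -- matching at h
    refine ⟨F1 h, G1 h, ?_, ?_, ?_⟩
    · exact ((hFd h).hasDerivWithinAt).congr hlowF (hlowF h ⟨hh.le, le_rfl⟩)
    · exact ((hGd h).hasDerivWithinAt).congr hhigh' (hhigh' h Set.self_mem_Ici)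
    · simp only [hF1, hG1]
      have hc2h : Complex.exp (c₂ * h) = El⁻¹ := by
        rw [hEl, ← Complex.exp_neg]; congr 1; rw [hc2]; ring
      have hEnh : Complex.exp (-c * (h:ℂ)) = E⁻¹ := by
        rw [hE, ← Complex.exp_neg]; congr 1; ring
      rw [hc2h, hEnh, hA, hB, hD, hE2, hEEl, ← hE, hc2]
      field_simp
      ring
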